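/- Let n ≥ 1 and let t₁, t₂, t₃ ∈ ℂ with |t₁|, |t₂|, |t₃| < 1. Then the sum of t₁^{n₁}·t₂^{n₂}·t₃^{n₃} over all triples (n₁, n₂, n₃) ∈ ℕ³ satisfying n₁ ≡ n₂ ≡ n₃ (mod n) converges and equals (1 − (t₁t₂t₃)^n) / [(1 − t₁^n)(1 − t₂^n)(1 − t₃^n)(1 − t₁t₂t₃)]. (This is the generating function counting the mesonic gauge invariant operators Tr(φ₁^{n₁}φ₂^{n₂}φ₃^{n₃}) of the ℂ³/(ℤ_n × ℤ_n) orbifold theory with discrete torsion, where the trace Tr(Q^{s₁}P^{s₂}(QP)^{−s₃}) is nonzero exactly when n₁ ≡ n₂ ≡ n₃ mod n.) -/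

import Mathlib

set_option maxHeartbeats 1000000


/-- The generating function of mesonic gauge invariants of the
`ℂ³/(ℤ_n × ℤ_n)` orbifold theory with discrete torsion: for `|tᵢ| < 1`, the sum
of `t₁^{n₁} t₂^{n₂} t₃^{n₃}` over all triples `(n₁, n₂, n₃) ∈ ℕ³` with
`n₁ ≡ n₂ ≡ n₃ (mod n)` converges and equals
`(1 - (t₁t₂t₃)^n)/((1 - t₁^n)(1 - t₂^n)(1 - t₃^n)(1 - t₁t₂t₃))`. -/
theorem discrete_torsion_generating_function (n : ℕ) (hn : 1 ≤ n) (t₁ t₂ t₃ : ℂ)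
    (h₁ : ‖t₁‖ < 1) (h₂ : ‖t₂‖ < 1) (h₃ : ‖t₃‖ < 1) :
    HasSum
      (fun v : {v : ℕ × ℕ × ℕ // v.1 % n = v.2.1 % n ∧ v.2.1 % n = v.2.2 % n} =>
        t₁ ^ (v : ℕ × ℕ × ℕ).1 * t₂ ^ (v : ℕ × ℕ × ℕ).2.1 * t₃ ^ (v : ℕ × ℕ × ℕ).2.2)
      ((1 - (t₁ * t₂ * t₃) ^ n) /
        ((1 - t₁ ^ n) * (1 - t₂ ^ n) * (1 - t₃ ^ n) * (1 - t₁ * t₂ * t₃))) := by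
  have hnpos : 0 < n := hn
  have hpow : ∀ t : ℂ, ‖t‖ < 1 → ‖t ^ n‖ < 1 := fun t ht => by
    rw [norm_pow]
    calc ‖t‖ ^ n ≤ ‖t‖ ^ 1 := pow_le_pow_of_le_one (norm_nonneg _) ht.le hn
      _ = ‖t‖ := pow_one _
      _ < 1 := ht
  have hp₁ := hpow t₁ h₁
  have hp₂ := hpow t₂ h₂
  have hp₃ := hpow t₃ h₃
  have habs : ‖t₁ * t₂ * t₃‖ < 1 := by
    have e : ‖t₁ * t₂ * t₃‖ = ‖t₁‖ * ‖t₂‖ * ‖t₃‖ := by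
      simp [map_mul]
    have n1 := norm_nonneg t₁
    have n2 := norm_nonneg t₂
    have n3 := norm_nonneg t₃
    rw [e]; nlinarith [mul_nonneg n1 n2, mul_nonneg (mul_nonneg n1 n2) n3, sq_nonneg (‖t₁‖ * ‖t₂‖)]
  -- geometric sums
  have g₁ := hasSum_geometric_of_norm_lt_one hp₁
  have g₂ := hasSum_geometric_of_norm_lt_one hp₂
  have g₃ := hasSum_geometric_of_norm_lt_one hp₃
  -- summability of norms
  have s₂ : Summable fun k : ℕ => ‖(t₂ ^ n) ^ k‖ := by
    simpa [norm_pow] using summable_geometric_of_lt_one (norm_nonneg _) hp₂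
  have s₃ : Summable fun k : ℕ => ‖(t₃ ^ n) ^ k‖ := by
    simpa [norm_pow] using summable_geometric_of_lt_one (norm_nonneg _) hp₃
  have s₁ : Summable fun k : ℕ => ‖(t₁ ^ n) ^ k‖ := by
    simpa [norm_pow] using summable_geometric_of_lt_one (norm_nonneg _) hp₁
  have g₂₃ : HasSum (fun p : ℕ × ℕ => (t₂ ^ n) ^ p.1 * (t₃ ^ n) ^ p.2)
      ((1 - t₂ ^ n)⁻¹ * (1 - t₃ ^ n)⁻¹) :=
    g₂.mul g₃ (summable_mul_of_summable_norm s₂ s₃)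
  have s₂₃ : Summable fun p : ℕ × ℕ => ‖(t₂ ^ n) ^ p.1 * (t₃ ^ n) ^ p.2‖ :=
    s₂.mul_norm s₃
  have g₁₂₃ : HasSum (fun p : ℕ × ℕ × ℕ => (t₁ ^ n) ^ p.1 * ((t₂ ^ n) ^ p.2.1 * (t₃ ^ n) ^ p.2.2))
      ((1 - t₁ ^ n)⁻¹ * ((1 - t₂ ^ n)⁻¹ * (1 - t₃ ^ n)⁻¹)) := by
    have sm := summable_mul_of_summable_norm (R := ℂ) s₁ s₂₃
    have h := g₁.mul g₂₃ sm
    exact h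
  -- finite geometric sum over residues
  have ht : t₁ * t₂ * t₃ ≠ 1 := fun h => by simp [h] at habs
  have gc : HasSum (fun r : Fin n => (t₁ * t₂ * t₃) ^ (r : ℕ))
      ((1 - (t₁ * t₂ * t₃) ^ n) / (1 - t₁ * t₂ * t₃)) := by
    have key : ((t₁*t₂*t₃)^n - 1)/(t₁*t₂*t₃ - 1)
        = (1 - (t₁*t₂*t₃)^n)/(1 - t₁*t₂*t₃) := by
      rw [div_eq_div_iff (sub_ne_zero.2 ht) (sub_ne_zero.2 (Ne.symm ht))]; ring
    have := hasSum_fintype (fun r : Fin n => (t₁ * t₂ * t₃) ^ (r : ℕ))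
    rwa [Fin.sum_univ_eq_sum_range, geom_sum_eq ht, key] at this
  have sc : Summable fun r : Fin n => ‖(t₁ * t₂ * t₃) ^ (r : ℕ)‖ := .of_finite
  have s₁₂₃ : Summable fun p : ℕ × ℕ × ℕ =>
      ‖(t₁ ^ n) ^ p.1 * ((t₂ ^ n) ^ p.2.1 * (t₃ ^ n) ^ p.2.2)‖ := by
    simpa using s₁.mul_norm s₂₃
  have gtot : HasSum (fun p : Fin n × ℕ × ℕ × ℕ =>
      (t₁ * t₂ * t₃) ^ (p.1 : ℕ) *
        ((t₁ ^ n) ^ p.2.1 * ((t₂ ^ n) ^ p.2.2.1 * (t₃ ^ n) ^ p.2.2.2)))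
      ((1 - (t₁ * t₂ * t₃) ^ n) / (1 - t₁ * t₂ * t₃) *
        ((1 - t₁ ^ n)⁻¹ * ((1 - t₂ ^ n)⁻¹ * (1 - t₃ ^ n)⁻¹))) := by
    have sm := summable_mul_of_summable_norm (R := ℂ) sc s₁₂₃
    have h := gc.mul g₁₂₃ sm
    exact h
  -- the reindexing equivalence
  let e : Fin n × ℕ × ℕ × ℕ ≃
      {v : ℕ × ℕ × ℕ // v.1 % n = v.2.1 % n ∧ v.2.1 % n = v.2.2 % n} :=
    { toFun := fun p => ⟨((p.1 : ℕ) + n * p.2.1, (p.1 : ℕ) + n * p.2.2.1,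
        (p.1 : ℕ) + n * p.2.2.2), by
        constructor <;> simp [Nat.add_mul_mod_self_left]⟩
      invFun := fun v => (⟨(v : ℕ × ℕ × ℕ).1 % n, Nat.mod_lt _ hnpos⟩,
        (v : ℕ × ℕ × ℕ).1 / n, (v : ℕ × ℕ × ℕ).2.1 / n, (v : ℕ × ℕ × ℕ).2.2 / n)
      left_inv := fun p => by
        obtain ⟨r, k₁, k₂, k₃⟩ := p
        have : ((r : ℕ) + n * k₁) % n = (r : ℕ) := by
          simp [Nat.add_mul_mod_self_left, Nat.mod_eq_of_lt r.isLt]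
        ext <;> simp [Nat.add_mul_mod_self_left, Nat.mod_eq_of_lt r.isLt,
          Nat.add_mul_div_left _ _ hnpos, Nat.div_eq_of_lt r.isLt]
      right_inv := fun v => by
        obtain ⟨⟨a, b, c⟩, hab, hbc⟩ := v
        have ha : a % n + n * (a / n) = a := Nat.mod_add_div a n
        have hb : a % n + n * (b / n) = b := by
          rw [hab]; exact Nat.mod_add_div b n
        have hc : a % n + n * (c / n) = c := by
          rw [hab, hbc]; exact Nat.mod_add_div c n
        simp only [Subtype.mk.injEq, Prod.mk.injEq]
        exact ⟨ha, hb, hc⟩ }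
  have hne₁ : (1 - t₁ ^ n) ≠ 0 := fun h => by
    rw [sub_eq_zero] at h; rw [← h] at hp₁; simp at hp₁
  have hne₂ : (1 - t₂ ^ n) ≠ 0 := fun h => by
    rw [sub_eq_zero] at h; rw [← h] at hp₂; simp at hp₂
  have hne₃ : (1 - t₃ ^ n) ≠ 0 := fun h => by
    rw [sub_eq_zero] at h; rw [← h] at hp₃; simp at hp₃
  have hne₄ : (1 - t₁ * t₂ * t₃) ≠ 0 := sub_ne_zero.2 (Ne.symm ht)
  have hval : (1 - (t₁ * t₂ * t₃) ^ n) /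
        ((1 - t₁ ^ n) * (1 - t₂ ^ n) * (1 - t₃ ^ n) * (1 - t₁ * t₂ * t₃))
      = (1 - (t₁ * t₂ * t₃) ^ n) / (1 - t₁ * t₂ * t₃) *
        ((1 - t₁ ^ n)⁻¹ * ((1 - t₂ ^ n)⁻¹ * (1 - t₃ ^ n)⁻¹)) := by
    rw [div_eq_mul_inv, div_eq_mul_inv, mul_inv, mul_inv, mul_inv]
    ring
  rw [hval]
  refine e.hasSum_iff.mp ?_
  convert gtot using 2 with p
  obtain ⟨r, k₁, k₂, k₃⟩ := p
  simp only [e, Equiv.coe_fn_mk, Function.comp_apply]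
  rw [pow_add, pow_add, pow_add, pow_mul, pow_mul, pow_mul]
  ring
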